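/- Let H be a gated set of vertices of a median graph G of dimension d. Then for every x ∈ H, the total boundary ∂*F(x) of the fiber F(x) contains no induced d-dimensional hypercube of G. -/

import Mathlib

open SimpleGraph Set

/-- The metric interval `I(u,v)` in a graph `G`. -/
def gInterval {V : Type*} (G : SimpleGraph V) (u v : V) : Set V :=
  {w | G.dist u w + G.dist w v = G.dist u v}

/-- A median graph: a connected graph in which every triplet of vertices has a
unique median, i.e. a unique vertex in `I(x,y) ∩ I(y,z) ∩ I(z,x)`. -/
def MedianGraph {V : Type*} (G : SimpleGraph V) : Prop :=
  G.Connected ∧ ∀ x y z : V,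
    ∃! m : V, m ∈ gInterval G x y ∧ m ∈ gInterval G y z ∧ m ∈ gInterval G z x

/-- `G` contains an induced `d`-dimensional hypercube all of whose vertices lie in `S`. -/
def HasCubeIn {V : Type*} (G : SimpleGraph V) (d : ℕ) (S : Set V) : Prop :=
  ∃ f : Finset (Fin d) → V, Function.Injective f ∧ (∀ A, f A ∈ S) ∧
    ∀ A B : Finset (Fin d), G.Adj (f A) (f B) ↔ (symmDiff A B).card = 1

/-- `G` contains an induced `d`-dimensional hypercube `Q_d`. -/
def HasInducedCube {V : Type*} (G : SimpleGraph V) (d : ℕ) : Prop :=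
  HasCubeIn G d Set.univ

/-- A cube-free (median) graph: no induced 3-dimensional hypercube. -/
def CubeFree {V : Type*} (G : SimpleGraph V) : Prop :=
  ¬ HasInducedCube G 3

/-- `g` is a gate of `v` in the set `S`. -/
def IsGate {V : Type*} (G : SimpleGraph V) (S : Set V) (v g : V) : Prop :=
  g ∈ S ∧ ∀ u ∈ S, G.dist v u = G.dist v g + G.dist g u

/-- A set of vertices is gated if every vertex has a gate in it. -/
def Gated {V : Type*} (G : SimpleGraph V) (S : Set V) : Prop :=
  ∀ v : V, ∃ g : V, IsGate G S v g

/-- A set of vertices is convex if it contains the interval between any two of its members. -/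
def GConvex {V : Type*} (G : SimpleGraph V) (S : Set V) : Prop :=
  ∀ u ∈ S, ∀ v ∈ S, gInterval G u v ⊆ S

/-- The star `St(z)`: the set of vertices lying in some induced hypercube of `G`
containing `z`. -/
def gStar {V : Type*} (G : SimpleGraph V) (z : V) : Set V :=
  {v | ∃ (d : ℕ) (f : Finset (Fin d) → V), Function.Injective f ∧
      (∀ A B : Finset (Fin d), G.Adj (f A) (f B) ↔ (symmDiff A B).card = 1) ∧
      (∃ A, f A = z) ∧ (∃ A, f A = v)}

/-- The fiber `F(x)` of `x` with respect to a (gated) set `H`: all vertices having `x`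
as their gate in `H`. -/
def fiber {V : Type*} (G : SimpleGraph V) (H : Set V) (x : V) : Set V :=
  {v | IsGate G H v x}

/-- Two fibers are neighboring when an edge of `G` joins them. -/
def Neighboring {V : Type*} (G : SimpleGraph V) (H : Set V) (x y : V) : Prop :=
  ∃ a ∈ fiber G H x, ∃ b ∈ fiber G H y, G.Adj a b

/-- The boundary `∂_y F(x)`: vertices of `F(x)` having a neighbor in `F(y)`. -/
def bdry {V : Type*} (G : SimpleGraph V) (H : Set V) (x y : V) : Set V :=
  {a | a ∈ fiber G H x ∧ ∃ b ∈ fiber G H y, G.Adj a b}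

/-- The total boundary `∂*F(x)`: union of the boundaries `∂_y F(x)` over all `y ∈ H`
adjacent to `x`. -/
def totalBdry {V : Type*} (G : SimpleGraph V) (H : Set V) (x : V) : Set V :=
  ⋃ (y : V) (_ : y ∈ H ∧ G.Adj x y), bdry G H x y

/-- The imprint set of `u` on `A`. -/
def imprints {V : Type*} (G : SimpleGraph V) (u : V) (A : Set V) : Set V :=
  {a ∈ A | gInterval G u a ∩ A = {a}}

/-- The halfspace `W(u,v)` associated with an edge `uv`. -/
def halfspaceW {V : Type*} (G : SimpleGraph V) (u v : V) : Set V :=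
  {z | G.dist z u < G.dist z v}

namespace TotalBoundaryDimAux

variable {V : Type*} {G : SimpleGraph V}

lemma median_exists (hG : MedianGraph G) (a b c : V) :
    ∃ m : V, (G.dist a m + G.dist m b = G.dist a b) ∧
      (G.dist b m + G.dist m c = G.dist b c) ∧
      (G.dist c m + G.dist m a = G.dist c a) := by
  obtain ⟨m, hm, -⟩ := hG.2 a b c
  exact ⟨m, hm.1, hm.2.1, hm.2.2⟩

lemma median_eq (hG : MedianGraph G) {a b c m₁ m₂ : V}
    (h1 : G.dist a m₁ + G.dist m₁ b = G.dist a b)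
    (h2 : G.dist b m₁ + G.dist m₁ c = G.dist b c)
    (h3 : G.dist c m₁ + G.dist m₁ a = G.dist c a)
    (k1 : G.dist a m₂ + G.dist m₂ b = G.dist a b)
    (k2 : G.dist b m₂ + G.dist m₂ c = G.dist b c)
    (k3 : G.dist c m₂ + G.dist m₂ a = G.dist c a) : m₁ = m₂ := by
  obtain ⟨m, -, hu⟩ := hG.2 a b c
  rw [hu m₁ ⟨h1, h2, h3⟩, hu m₂ ⟨k1, k2, k3⟩]

/-- Median graphs have no "equidistant" neighbors: adjacent vertices have distances
to any `z` differing by exactly one. -/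
lemma adj_dist_cases (hG : MedianGraph G) {v w : V} (hvw : G.Adj v w) (z : V) :
    G.dist v z = G.dist w z + 1 ∨ G.dist w z = G.dist v z + 1 := by
  have hc := hG.1
  have h1 : G.dist v w = 1 := dist_eq_one_iff_adj.mpr hvw
  have h2 : G.dist w v = 1 := by rw [SimpleGraph.dist_comm]; exact h1
  have t1 : G.dist v z ≤ G.dist v w + G.dist w z := hc.dist_triangle
  have t2 : G.dist w z ≤ G.dist w v + G.dist v z := hc.dist_triangle
  have hne : G.dist v z ≠ G.dist w z := by
    intro he
    obtain ⟨m, e1, e2, e3⟩ := median_exists hG v w z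
    rw [h1] at e1
    have hcase : G.dist v m = 0 ∨ G.dist m w = 0 := by omega
    rcases hcase with h0 | h0
    · have hm : v = m := hc.dist_eq_zero_iff.mp h0
      rw [← hm] at e2
      -- e2 : G.dist w v + G.dist v z = G.dist w z
      omega
    · have hm : m = w := hc.dist_eq_zero_iff.mp h0
      rw [hm] at e3
      -- e3 : G.dist z w + G.dist w v = G.dist z v
      have c1 : G.dist z w = G.dist w z := SimpleGraph.dist_comm
      have c2 : G.dist z v = G.dist v z := SimpleGraph.dist_comm
      omega
  omega

lemma triangle_free (hG : MedianGraph G) {a b c : V} (hab : G.Adj a b)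
    (hac : G.Adj a c) (hbc : G.Adj b c) : False := by
  have h1 : G.dist a c = 1 := dist_eq_one_iff_adj.mpr hac
  have h2 : G.dist b c = 1 := dist_eq_one_iff_adj.mpr hbc
  rcases adj_dist_cases hG hab c with h | h <;> omega

lemma dist_two (hG : MedianGraph G) {v w₁ w₂ : V} (h1 : G.Adj v w₁)
    (h2 : G.Adj v w₂) (hne : w₁ ≠ w₂) : G.dist w₁ w₂ = 2 := by
  have hc := hG.1
  have hna : ¬ G.Adj w₁ w₂ := fun h => triangle_free hG h1 h2 h
  have d1 : G.dist w₁ v = 1 := by rw [SimpleGraph.dist_comm]; exact dist_eq_one_iff_adj.mpr h1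
  have d2 : G.dist v w₂ = 1 := dist_eq_one_iff_adj.mpr h2
  have t : G.dist w₁ w₂ ≤ G.dist w₁ v + G.dist v w₂ := hc.dist_triangle
  have h0 : G.dist w₁ w₂ ≠ 0 := fun h => hne (hc.dist_eq_zero_iff.mp h)
  have hone : G.dist w₁ w₂ ≠ 1 := fun h => hna (dist_eq_one_iff_adj.mp h)
  omega

/-- The quadrangle condition in median graphs. -/
lemma quad (hG : MedianGraph G) {z v w₁ w₂ : V} (h1 : G.Adj v w₁) (h2 : G.Adj v w₂)
    (hne : w₁ ≠ w₂) (d1 : G.dist w₁ z + 1 = G.dist v z) (d2 : G.dist w₂ z + 1 = G.dist v z) :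
    ∃ t, G.Adj t w₁ ∧ G.Adj t w₂ ∧ G.dist t z + 2 = G.dist v z := by
  have hc := hG.1
  obtain ⟨m, e1, e2, e3⟩ := median_exists hG w₁ w₂ z
  have h12 : G.dist w₁ w₂ = 2 := dist_two hG h1 h2 hne
  have h21 : G.dist w₂ w₁ = 2 := by rw [SimpleGraph.dist_comm]; exact h12
  rw [h12] at e1
  by_cases hm1 : G.dist w₁ m = 0
  · exfalso
    have hm : w₁ = m := hc.dist_eq_zero_iff.mp hm1
    rw [← hm] at e2
    -- e2 : G.dist w₂ w₁ + G.dist w₁ z = G.dist w₂ z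
    omega
  by_cases hm2 : G.dist m w₂ = 0
  · exfalso
    have hm : m = w₂ := hc.dist_eq_zero_iff.mp hm2
    rw [hm] at e3
    -- e3 : G.dist z w₂ + G.dist w₂ w₁ = G.dist z w₁
    have c1 : G.dist z w₂ = G.dist w₂ z := SimpleGraph.dist_comm
    have c2 : G.dist z w₁ = G.dist w₁ z := SimpleGraph.dist_comm
    have c3 : G.dist w₂ w₁ = 2 := h21
    omega
  have hw1m : G.dist w₁ m = 1 := by omega
  have hmw2 : G.dist m w₂ = 1 := by omega
  have a1 : G.Adj m w₁ := (dist_eq_one_iff_adj.mp hw1m).symm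
  have a2 : G.Adj m w₂ := dist_eq_one_iff_adj.mp hmw2
  refine ⟨m, a1, a2, ?_⟩
  have c1 : G.dist z m = G.dist m z := SimpleGraph.dist_comm
  have c2 : G.dist z w₁ = G.dist w₁ z := SimpleGraph.dist_comm
  have c3 : G.dist m w₁ = 1 := by rw [SimpleGraph.dist_comm]; exact hw1m
  omega

/-- Two vertices cannot have three distinct common neighbors in a median graph. -/
lemma common_nbrs (hG : MedianGraph G) {p q u₁ u₂ u₃ : V} (hpq : p ≠ q)
    (h1 : G.Adj p u₁) (h2 : G.Adj p u₂) (h3 : G.Adj p u₃)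
    (k1 : G.Adj u₁ q) (k2 : G.Adj u₂ q) (k3 : G.Adj u₃ q)
    (n12 : u₁ ≠ u₂) (n13 : u₁ ≠ u₃) (n23 : u₂ ≠ u₃) : False := by
  have d12 : G.dist u₁ u₂ = 2 := dist_two hG h1 h2 n12
  have d23 : G.dist u₂ u₃ = 2 := dist_two hG h2 h3 n23
  have d31 : G.dist u₃ u₁ = 2 := dist_two hG h3 h1 n13.symm
  have dp : ∀ {a b : V}, G.Adj a b → G.dist a b = 1 := fun h => dist_eq_one_iff_adj.mpr h
  apply hpq
  exact median_eq hG (a := u₁) (b := u₂) (c := u₃)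
    (by rw [dp h1.symm, dp h2, d12])
    (by rw [dp h2.symm, dp h3, d23])
    (by rw [dp h3.symm, dp h1, d31])
    (by rw [dp k1, dp k2.symm, d12])
    (by rw [dp k2, dp k3.symm, d23])
    (by rw [dp k3, dp k1.symm, d31])

lemma square_excl (hG : MedianGraph G) {p q r s : V} (z : V)
    (hpq : G.Adj p q) (hqr : G.Adj q r) (hrs : G.Adj r s) (hsp : G.Adj s p)
    (hpr : p ≠ r) (hqs : q ≠ s)
    (e1 : G.dist p z = G.dist r z) (e2 : G.dist q z = G.dist s z) : False := by
  rcases adj_dist_cases hG hpq z with h | h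
  · -- q, s below p, r
    obtain ⟨t, tq, ts, ht⟩ := quad (z := z) hG hpq hsp.symm hqs (by omega) (by omega)
    exact common_nbrs hG hqs hpq.symm hqr tq.symm hsp.symm hrs ts hpr
      (fun he => by subst he; omega) (fun he => by subst he; omega)
  · -- p, r below q, s
    obtain ⟨t, tp, tr, ht⟩ := quad (z := z) hG hpq.symm hqr hpr (by omega) (by omega)
    exact common_nbrs hG hpr hpq hsp.symm tp.symm hqr hrs.symm tr hqs
      (fun he => by subst he; omega) (fun he => by subst he; omega)

/-- Distances to any base point are "linear" on an induced square. -/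
lemma square_sum (hG : MedianGraph G) {p q r s : V} (z : V)
    (hpq : G.Adj p q) (hqr : G.Adj q r) (hrs : G.Adj r s) (hsp : G.Adj s p)
    (hpr : p ≠ r) (hqs : q ≠ s) :
    G.dist p z + G.dist r z = G.dist q z + G.dist s z := by
  have hx : ¬ (G.dist p z = G.dist r z ∧ G.dist q z = G.dist s z) :=
    fun ⟨e1, e2⟩ => square_excl hG z hpq hqr hrs hsp hpr hqs e1 e2
  have a1 := adj_dist_cases hG hpq z
  have a2 := adj_dist_cases hG hqr z
  have a3 := adj_dist_cases hG hrs z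
  have a4 := adj_dist_cases hG hsp z
  omega

section Fibers

variable {H : Set V} {x y : V}

lemma fiber_dist {v : V} (hv : v ∈ fiber G H x) {u : V} (hu : u ∈ H) :
    G.dist v u = G.dist v x + G.dist x u := hv.2 u hu

lemma cross (hG : MedianGraph G) (hxH : x ∈ H) (hyH : y ∈ H) (hxy : G.Adj x y)
    {a b : V} (ha : a ∈ fiber G H x) (hb : b ∈ fiber G H y) (hab : G.Adj a b) :
    G.dist b y = G.dist a x ∧ G.dist a y = G.dist a x + 1 ∧
      G.dist b x = G.dist b y + 1 := by
  have hc := hG.1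
  have dxy : G.dist x y = 1 := dist_eq_one_iff_adj.mpr hxy
  have dyx : G.dist y x = 1 := by rw [SimpleGraph.dist_comm]; exact dxy
  have day : G.dist a y = G.dist a x + G.dist x y := ha.2 y hyH
  have dbx : G.dist b x = G.dist b y + G.dist y x := hb.2 x hxH
  have dab : G.dist a b = 1 := dist_eq_one_iff_adj.mpr hab
  have dba : G.dist b a = 1 := by rw [SimpleGraph.dist_comm]; exact dab
  have t1 : G.dist a y ≤ G.dist a b + G.dist b y := hc.dist_triangle
  have t2 : G.dist b x ≤ G.dist b a + G.dist a x := hc.dist_triangle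
  omega

lemma fibers_disjoint (hxH : x ∈ H) (hyH : y ∈ H) (hxy : G.Adj x y) {w : V}
    (h1 : w ∈ fiber G H x) (h2 : w ∈ fiber G H y) : False := by
  have dxy : G.dist x y = 1 := dist_eq_one_iff_adj.mpr hxy
  have dyx : G.dist y x = 1 := by rw [SimpleGraph.dist_comm]; exact dxy
  have e1 : G.dist w y = G.dist w x + G.dist x y := h1.2 y hyH
  have e2 : G.dist w x = G.dist w y + G.dist y x := h2.2 x hxH
  omega

/-- A vertex of `F(x)` has at most one neighbor in `F(y)`. -/
lemma nbr_unique (hG : MedianGraph G) (hxH : x ∈ H) (hyH : y ∈ H) (hxy : G.Adj x y)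
    {w t₁ t₂ : V} (hw : w ∈ fiber G H x)
    (h1 : t₁ ∈ fiber G H y) (h2 : t₂ ∈ fiber G H y)
    (a1 : G.Adj w t₁) (a2 : G.Adj w t₂) : t₁ = t₂ := by
  have hc := hG.1
  by_contra hne
  obtain ⟨c11, c12, c13⟩ := cross hG hxH hyH hxy hw h1 a1
  obtain ⟨c21, c22, c23⟩ := cross hG hxH hyH hxy hw h2 a2
  set a := G.dist w x with ha
  rcases Nat.eq_zero_or_pos a with h0 | hpos
  · apply hne
    rw [hc.dist_eq_zero_iff.mp (by omega : G.dist t₁ y = 0),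
      hc.dist_eq_zero_iff.mp (by omega : G.dist t₂ y = 0)]
  obtain ⟨m, m1, m2, hm⟩ := quad (z := y) hG a1 a2 hne (by omega) (by omega)
  -- both w and m are medians of (t₁, t₂, x)
  have d12 : G.dist t₁ t₂ = 2 := dist_two hG a1 a2 hne
  have dp : ∀ {u v : V}, G.Adj u v → G.dist u v = 1 := fun h => dist_eq_one_iff_adj.mpr h
  have dmx : G.dist m x = a := by
    have u1 : G.dist m x ≤ G.dist m y + G.dist y x := hc.dist_triangle
    have u2 : G.dist t₁ x ≤ G.dist t₁ m + G.dist m x := hc.dist_triangle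
    have u3 : G.dist t₁ m = 1 := dp m1.symm
    have u4 : G.dist y x = 1 := by rw [SimpleGraph.dist_comm]; exact dp hxy
    omega
  have cxw : G.dist x w = G.dist w x := SimpleGraph.dist_comm
  have cxm : G.dist x m = G.dist m x := SimpleGraph.dist_comm
  have cxt : G.dist x t₁ = G.dist t₁ x := SimpleGraph.dist_comm
  have hwm : w = m := by
    apply median_eq hG (a := t₁) (b := t₂) (c := x)
    · rw [dp a1.symm, dp a2, d12]
    · rw [dp a2.symm]; omega
    · rw [dp a1]; omega
    · rw [dp m1.symm, dp m2, d12]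
    · rw [dp m2.symm]; omega
    · rw [dp m1]; omega
  rw [hwm] at c12
  omega

/-- If a neighbor of a fiber vertex is one step closer to the gate, it lies in the fiber. -/
lemma gate_of_nbr (hG : MedianGraph G) (hxH : x ∈ H) {c s : V}
    (hcf : c ∈ fiber G H x) (hcs : G.Adj c s) (hd : G.dist s x + 1 = G.dist c x) :
    s ∈ fiber G H x := by
  have hc := hG.1
  refine ⟨hxH, fun u hu => ?_⟩
  have e1 : G.dist c u = G.dist c x + G.dist x u := hcf.2 u hu
  have t1 : G.dist c u ≤ G.dist c s + G.dist s u := hc.dist_triangle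
  have t2 : G.dist s u ≤ G.dist s x + G.dist x u := hc.dist_triangle
  have dcs : G.dist c s = 1 := dist_eq_one_iff_adj.mpr hcs
  omega

/-- Downward propagation of neighbors in the adjacent fiber. -/
lemma prop_down (hG : MedianGraph G) (hxH : x ∈ H) (hyH : y ∈ H) (hxy : G.Adj x y)
    {v w v' : V} (hv : v ∈ fiber G H x) (hw : w ∈ fiber G H x)
    (hvw : G.Adj v w) (hd : G.dist w x + 1 = G.dist v x)
    (hv' : v' ∈ fiber G H y) (ha : G.Adj v v') :
    ∃ t, t ∈ fiber G H y ∧ G.Adj w t ∧ G.Adj t v' := by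
  obtain ⟨c1, c2, c3⟩ := cross hG hxH hyH hxy hv hv' ha
  have dxy : G.dist x y = 1 := dist_eq_one_iff_adj.mpr hxy
  have dwy : G.dist w y = G.dist w x + G.dist x y := hw.2 y hyH
  have hne : w ≠ v' := fun he => fibers_disjoint hxH hyH hxy hw (he ▸ hv')
  obtain ⟨t, t1, t2, ht⟩ := quad (z := y) hG hvw ha hne (by omega) (by omega)
  have htf : t ∈ fiber G H y := by
    apply gate_of_nbr hG hyH hv' t2.symm
    omega
  exact ⟨t, htf, t1.symm, t2⟩

end Fibers

section FinsetLemmas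

variable {α : Type*} [DecidableEq α]

lemma symmDiff_insert_self {A : Finset α} {i : α} (h : i ∉ A) :
    symmDiff A (insert i A) = {i} := by
  ext a
  simp only [Finset.mem_symmDiff, Finset.mem_insert, Finset.mem_singleton]
  by_cases hai : a = i <;> simp [hai] <;> tauto

lemma card_symmDiff_insert {A : Finset α} {i : α} (h : i ∉ A) :
    (symmDiff A (insert i A)).card = 1 := by
  rw [symmDiff_insert_self h, Finset.card_singleton]

lemma symmDiff_insert_erase {M A : Finset α} {i : α} (h1 : i ∈ M) (h2 : i ∉ A) :
    symmDiff M (insert i A) = (symmDiff M A).erase i := by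
  ext a
  simp only [Finset.mem_symmDiff, Finset.mem_insert, Finset.mem_erase]
  by_cases hai : a = i <;> simp [hai] <;> tauto

lemma symmDiff_erase_erase {M A : Finset α} {i : α} (h1 : i ∉ M) (h2 : i ∈ A) :
    symmDiff M (A.erase i) = (symmDiff M A).erase i := by
  ext a
  simp only [Finset.mem_symmDiff, Finset.mem_erase]
  by_cases hai : a = i <;> simp [hai] <;> tauto

end FinsetLemmas

/-- Linearity of distances to a base point on an induced cube in a median graph. -/
lemma cube_linear (hG : MedianGraph G) {d : ℕ} {f : Finset (Fin d) → V}
    (finj : Function.Injective f)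
    (fadj : ∀ A B, G.Adj (f A) (f B) ↔ (symmDiff A B).card = 1) (x : V) :
    ∀ (A : Finset (Fin d)) (i : Fin d), i ∉ A →
      (G.dist (f (insert i A)) x = G.dist (f A) x + 1 ↔
        G.dist (f {i}) x = G.dist (f ∅) x + 1) := by
  intro A
  induction A using Finset.induction_on with
  | empty =>
    intro i _
    rfl
  | @insert j A' hjA' ih =>
    intro i hi
    simp only [Finset.mem_insert, not_or] at hi
    obtain ⟨hij, hiA'⟩ := hi
    have hjq : j ∉ insert i A' := by
      simp only [Finset.mem_insert, not_or]
      exact ⟨fun h => hij h.symm, hjA'⟩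
    have hisA : i ∉ insert j A' := by
      simp only [Finset.mem_insert, not_or]
      exact ⟨hij, hiA'⟩
    -- square: p = A', q = insert i A', r = insert i (insert j A'), s = insert j A'
    have hr : insert i (insert j A') = insert j (insert i A') := Finset.insert_comm i j A'
    have apq : G.Adj (f A') (f (insert i A')) :=
      (fadj _ _).mpr (card_symmDiff_insert hiA')
    have aqr : G.Adj (f (insert i A')) (f (insert i (insert j A'))) := by
      rw [hr]
      exact (fadj _ _).mpr (card_symmDiff_insert hjq)
    have asr : G.Adj (f (insert j A')) (f (insert i (insert j A'))) :=
      (fadj _ _).mpr (card_symmDiff_insert hisA)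
    have aps : G.Adj (f A') (f (insert j A')) :=
      (fadj _ _).mpr (card_symmDiff_insert hjA')
    have hprne : f A' ≠ f (insert i (insert j A')) := by
      intro he
      have := finj he
      apply hiA'
      rw [this]
      exact Finset.mem_insert_self i _
    have hqsne : f (insert i A') ≠ f (insert j A') := by
      intro he
      have := finj he
      apply hiA'
      have : i ∈ insert j A' := this ▸ Finset.mem_insert_self i A'
      rcases Finset.mem_insert.mp this with h | h
      · exact absurd h hij
      · exact h
    have hsum := square_sum hG x apq aqr asr.symm aps.symm hprne hqsne
    have e1 := adj_dist_cases hG apq x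
    have e2 := adj_dist_cases hG aqr x
    have e3 := adj_dist_cases hG asr x
    have e4 := adj_dist_cases hG aps x
    rw [← ih i hiA']
    constructor <;> intro <;> omega

variable {H : Set V} {x : V}

end TotalBoundaryDimAux

open TotalBoundaryDimAux

/-- In a median graph of dimension `d`, the total boundary of a fiber of a gated set
contains no induced `d`-dimensional hypercube. -/
theorem total_boundary_dim {V : Type*} (G : SimpleGraph V) (hG : MedianGraph G)
    (d : ℕ) (hd : HasInducedCube G d) (hmax : ∀ d' : ℕ, HasInducedCube G d' → d' ≤ d)
    (H : Set V) (hH : Gated G H) (x : V) (hx : x ∈ H) :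
    ¬ HasCubeIn G d (totalBdry G H x) := by
  classical
  rintro ⟨f, finj, fmem, fadj⟩
  have hc := hG.1
  have hfib : ∀ A, f A ∈ fiber G H x := by
    intro A
    have := fmem A
    simp only [totalBdry, Set.mem_iUnion] at this
    obtain ⟨y, hy, hb⟩ := this
    exact hb.1
  -- the "top" vertex of the cube (farthest from x)
  set Amax : Finset (Fin d) :=
    Finset.univ.filter (fun i => G.dist (f {i}) x = G.dist (f ∅) x + 1) with hAmax
  have hlin := cube_linear hG finj fadj x
  have hstep : ∀ (A : Finset (Fin d)) (i : Fin d), i ∉ A →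
      ((i ∈ Amax → G.dist (f (insert i A)) x = G.dist (f A) x + 1) ∧
       (i ∉ Amax → G.dist (f A) x = G.dist (f (insert i A)) x + 1)) := by
    intro A i hiA
    have hmem : i ∈ Amax ↔ G.dist (f {i}) x = G.dist (f ∅) x + 1 := by
      simp [hAmax]
    have hedge := adj_dist_cases hG ((fadj _ _).mpr (card_symmDiff_insert hiA)) x
    have hl := hlin A i hiA
    constructor
    · intro hi
      exact hl.mpr (hmem.mp hi)
    · intro hi
      have : ¬ G.dist (f (insert i A)) x = G.dist (f A) x + 1 :=
        fun h => hi (hmem.mpr (hl.mp h))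
      omega
  -- choose the neighboring fiber at the top vertex
  have htop := fmem Amax
  simp only [totalBdry, Set.mem_iUnion] at htop
  obtain ⟨y, ⟨hyH, hxy⟩, -, b₀, hb₀, hab₀⟩ := htop
  -- every cube vertex has a neighbor in F(y)
  have hpart : ∀ n (A : Finset (Fin d)), (symmDiff Amax A).card = n →
      ∃ b, b ∈ fiber G H y ∧ G.Adj (f A) b := by
    intro n
    induction n with
    | zero =>
      intro A hA
      have : Amax = A := symmDiff_eq_bot.mp (Finset.card_eq_zero.mp hA)
      subst this
      exact ⟨b₀, hb₀, hab₀⟩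
    | succ n ih =>
      intro A hA
      have hne : (symmDiff Amax A).Nonempty := by
        rw [← Finset.card_pos, hA]; omega
      obtain ⟨i, hi⟩ := hne
      rw [Finset.mem_symmDiff] at hi
      rcases hi with ⟨hiM, hiA⟩ | ⟨hiA, hiM⟩
      · -- i ∈ Amax, i ∉ A : move up to insert i A
        have hcard : (symmDiff Amax (insert i A)).card = n := by
          have hmem : i ∈ symmDiff Amax A := Finset.mem_symmDiff.mpr (Or.inl ⟨hiM, hiA⟩)
          rw [symmDiff_insert_erase hiM hiA, Finset.card_erase_of_mem hmem, hA]
          omega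
        obtain ⟨b, hbY, hadj⟩ := ih (insert i A) hcard
        have hAf : G.Adj (f (insert i A)) (f A) :=
          ((fadj A (insert i A)).mpr (card_symmDiff_insert hiA)).symm
        have hdd : G.dist (f A) x + 1 = G.dist (f (insert i A)) x :=
          ((hstep A i hiA).1 hiM).symm
        obtain ⟨t, htY, hwt, -⟩ :=
          prop_down hG hx hyH hxy (hfib _) (hfib A) hAf hdd hbY hadj
        exact ⟨t, htY, hwt⟩
      · -- i ∈ A, i ∉ Amax : move down to A.erase i
        have hAi : insert i (A.erase i) = A := Finset.insert_erase hiA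
        have hcard : (symmDiff Amax (A.erase i)).card = n := by
          have hmem : i ∈ symmDiff Amax A := Finset.mem_symmDiff.mpr (Or.inr ⟨hiA, hiM⟩)
          rw [symmDiff_erase_erase hiM hiA, Finset.card_erase_of_mem hmem, hA]
          omega
        obtain ⟨b, hbY, hadj⟩ := ih (A.erase i) hcard
        have hiB : i ∉ A.erase i := Finset.notMem_erase _ _
        have hstep' := (hstep (A.erase i) i hiB).2 hiM
        rw [hAi] at hstep'
        have hAf : G.Adj (f (A.erase i)) (f A) := by
          conv_rhs => rw [← hAi]
          exact (fadj _ _).mpr (card_symmDiff_insert hiB)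
        obtain ⟨t, htY, hwt, -⟩ :=
          prop_down hG hx hyH hxy (hfib _) (hfib A) hAf hstep'.symm hbY hadj
        exact ⟨t, htY, hwt⟩
  have hP : ∀ A : Finset (Fin d), ∃ b, b ∈ fiber G H y ∧ G.Adj (f A) b :=
    fun A => hpart _ A rfl
  choose p hpY hpadj using hP
  -- basic facts about partners
  have hdistp : ∀ A, G.dist (p A) x = G.dist (f A) x + 1 := by
    intro A
    obtain ⟨c1, c2, c3⟩ := cross hG hx hyH hxy (hfib A) (hpY A) (hpadj A)
    omega
  -- uniqueness of partners
  have huniq : ∀ {w t₁ t₂ : V}, w ∈ fiber G H x → t₁ ∈ fiber G H y → t₂ ∈ fiber G H y →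
      G.Adj w t₁ → G.Adj w t₂ → t₁ = t₂ :=
    fun hw h1 h2 a1 a2 => nbr_unique hG hx hyH hxy hw h1 h2 a1 a2
  have huniq' : ∀ {w t₁ t₂ : V}, w ∈ fiber G H y → t₁ ∈ fiber G H x → t₂ ∈ fiber G H x →
      G.Adj w t₁ → G.Adj w t₂ → t₁ = t₂ :=
    fun hw h1 h2 a1 a2 => nbr_unique hG hyH hx hxy.symm hw h1 h2 a1 a2
  -- p adjacency, directional version
  have hpdir : ∀ A B, G.Adj (f A) (f B) → G.dist (f B) x + 1 = G.dist (f A) x →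
      G.Adj (p A) (p B) := by
    intro A B hAB hdd
    obtain ⟨t, htY, hwt, htv'⟩ :=
      prop_down hG hx hyH hxy (hfib A) (hfib B) hAB hdd (hpY A) (hpadj A)
    have : t = p B := huniq (hfib B) htY (hpY B) hwt (hpadj B)
    subst this
    exact htv'.symm
  -- f-p adjacency
  have hfp : ∀ A B, G.Adj (f A) (p B) ↔ A = B := by
    intro A B
    constructor
    · intro h
      have : f A = f B := huniq' (hpY B) (hfib A) (hfib B) h.symm (hpadj B).symm
      exact finj this
    · rintro rfl
      exact hpadj A
  -- p-p adjacency, converse directional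
  have hppdir : ∀ A B, G.Adj (p A) (p B) → G.dist (p A) x + 1 = G.dist (p B) x →
      G.Adj (f A) (f B) := by
    intro A B hpq hdd
    have hfBpA : f B ≠ p A := fun he =>
      fibers_disjoint hx hyH hxy (he ▸ hfib B) (hpY A)
    have hd1 : G.dist (f B) x + 1 = G.dist (p B) x := (hdistp B).symm
    obtain ⟨s, s1, s2, hs⟩ := quad (z := x) hG (hpadj B).symm hpq.symm hfBpA hd1 hdd
    have hsx : G.dist s x + 1 = G.dist (f B) x := by omega
    have hsf : s ∈ fiber G H x := gate_of_nbr hG hx (hfib B) s1.symm hsx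
    have : s = f A := huniq' (hpY A) hsf (hfib A) s2.symm (hpadj A).symm
    subst this
    exact s1
  -- full p-p adjacency characterization
  have hpp : ∀ A B, G.Adj (p A) (p B) ↔ (symmDiff A B).card = 1 := by
    intro A B
    constructor
    · intro h
      rcases adj_dist_cases hG h x with hcase | hcase
      · have := hppdir B A h.symm (by omega)
        exact (fadj A B).mp this.symm
      · exact (fadj A B).mp (hppdir A B h (by omega))
    · intro h
      have hAB : G.Adj (f A) (f B) := (fadj A B).mpr h
      rcases adj_dist_cases hG hAB x with hcase | hcase
      · exact hpdir A B hAB (by omega)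
      · exact (hpdir B A hAB.symm (by omega)).symm
  have hpinj : Function.Injective p := by
    intro A B h
    apply (hfp A B).mp
    rw [← h]
    exact hpadj A
  have hpfne : ∀ A B, p A ≠ f B := fun A B he =>
    fibers_disjoint hx hyH hxy (hfib B) (he ▸ hpY A)
  -- build the (d+1)-cube
  set lst : Fin (d + 1) := Fin.last d with hlst
  set r : Finset (Fin (d + 1)) → Finset (Fin d) :=
    fun A => A.preimage Fin.castSucc (Fin.castSucc_injective d).injOn with hrdef
  have hmemr : ∀ (A : Finset (Fin (d + 1))) (i : Fin d),
      i ∈ r A ↔ Fin.castSucc i ∈ A := by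
    intro A i
    simp [hrdef, Finset.mem_preimage]
  have hrsymm : ∀ A B : Finset (Fin (d + 1)),
      r (symmDiff A B) = symmDiff (r A) (r B) := by
    intro A B
    ext i
    simp only [hmemr, Finset.mem_symmDiff]
  have hcardr : ∀ S : Finset (Fin (d + 1)),
      S.card = (r S).card + (if lst ∈ S then 1 else 0) := by
    intro S
    have hmap : (r S).map ⟨Fin.castSucc, Fin.castSucc_injective d⟩ = S.erase lst := by
      ext a
      simp only [Finset.mem_map, Function.Embedding.coeFn_mk, Finset.mem_erase]
      constructor
      · rintro ⟨i, hi, rfl⟩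
        exact ⟨(Fin.castSucc_lt_last i).ne, (hmemr S i).mp hi⟩
      · rintro ⟨hne, hmem⟩
        obtain ⟨i, rfl⟩ := Fin.exists_castSucc_eq.mpr hne
        exact ⟨i, (hmemr S i).mpr hmem, rfl⟩
    have hcard : (r S).card = (S.erase lst).card := by
      rw [← hmap, Finset.card_map]
    by_cases hl : lst ∈ S
    · rw [hcard, Finset.card_erase_of_mem hl]
      have : 1 ≤ S.card := Finset.card_pos.mpr ⟨lst, hl⟩
      simp [hl]
      omega
    · rw [hcard, Finset.erase_eq_of_notMem hl]
      simp [hl]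
  have hext : ∀ A B : Finset (Fin (d + 1)), r A = r B → (lst ∈ A ↔ lst ∈ B) →
      A = B := by
    intro A B hr hl
    ext a
    rcases Fin.eq_castSucc_or_eq_last a with ⟨i, rfl⟩ | rfl
    · rw [← hmemr A i, ← hmemr B i, hr]
    · exact hl
  set g : Finset (Fin (d + 1)) → V :=
    fun A => if lst ∈ A then p (r A) else f (r A) with hgdef
  have hcube : HasInducedCube G (d + 1) := by
    refine ⟨g, ?_, fun _ => Set.mem_univ _, ?_⟩
    · intro A B hAB
      by_cases hlA : lst ∈ A <;> by_cases hlB : lst ∈ B <;>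
        simp only [hgdef, hlA, hlB, if_true, if_false] at hAB
      · exact hext A B (hpinj hAB) (by simp [hlA, hlB])
      · exact absurd hAB (hpfne _ _)
      · exact absurd hAB.symm (hpfne _ _)
      · exact hext A B (finj hAB) (by simp [hlA, hlB])
    · intro A B
      have hkey : (symmDiff A B).card =
          (symmDiff (r A) (r B)).card + (if lst ∈ symmDiff A B then 1 else 0) := by
        rw [← hrsymm]
        exact hcardr _
      have hlmem : lst ∈ symmDiff A B ↔ ((lst ∈ A) ↔ ¬ (lst ∈ B)) := by
        rw [Finset.mem_symmDiff]
        tauto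
      by_cases hlA : lst ∈ A <;> by_cases hlB : lst ∈ B <;>
        simp only [hgdef, hlA, hlB, if_true, if_false]
      · have hnl : lst ∉ symmDiff A B := by rw [hlmem]; tauto
        rw [hpp, hkey, if_neg hnl]
        omega
      · have hl : lst ∈ symmDiff A B := by rw [hlmem]; tauto
        rw [hkey, if_pos hl]
        have : G.Adj (p (r A)) (f (r B)) ↔ r B = r A := by
          constructor
          · intro h
            exact (hfp (r B) (r A)).mp h.symm
          · rintro he
            rw [he]
            exact (hpadj (r A)).symm
        rw [this]
        constructor
        · intro he
          rw [he]
          simp [symmDiff_self]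
        · intro hcd
          have : (symmDiff (r A) (r B)).card = 0 := by omega
          exact (symmDiff_eq_bot.mp (Finset.card_eq_zero.mp this)).symm
      · have hl : lst ∈ symmDiff A B := by rw [hlmem]; tauto
        rw [hkey, if_pos hl]
        rw [hfp]
        constructor
        · intro he
          rw [he]
          simp [symmDiff_self]
        · intro hcd
          have : (symmDiff (r A) (r B)).card = 0 := by omega
          exact symmDiff_eq_bot.mp (Finset.card_eq_zero.mp this)
      · have hnl : lst ∉ symmDiff A B := by rw [hlmem]; tauto
        rw [fadj, hkey, if_neg hnl]
        omega
  have := hmax (d + 1) hcube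
  omega
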